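/- For all real numbers a, b, c with a ≥ 0, c > 0, and b ≤ 0, we have exp((2ab + b²)/(2c)) ≤ 1 + ab/c + (b²/(2c))·((a² + b²)/c + 1)·exp(b²/(2c)). -/

import Mathlib

lemma exp_le_quad {x : ℝ} (hx : x ≤ 0) : Real.exp x ≤ 1 + x + x ^ 2 / 2 := by
  have h := Real.quadratic_le_exp_of_nonneg (x := -x) (by linarith)
  have hpos : (0:ℝ) < 1 + -x + (-x) ^ 2 / 2 := by nlinarith
  have hinv : Real.exp x = (Real.exp (-x))⁻¹ := by
    rw [Real.exp_neg, inv_inv]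
  rw [hinv]
  rw [inv_le_iff_one_le_mul₀ (Real.exp_pos _)]
  nlinarith [Real.exp_pos (-x), sq_nonneg x, sq_nonneg (x^2)]

theorem stmt_1 (a b c : ℝ) (ha : 0 ≤ a) (hc : 0 < c) (hb : b ≤ 0) :
    Real.exp ((2 * a * b + b ^ 2) / (2 * c)) ≤
      1 + a * b / c +
        b ^ 2 / (2 * c) * ((a ^ 2 + b ^ 2) / c + 1) *
          Real.exp (b ^ 2 / (2 * c)) := by
  have hc' : c ≠ 0 := ne_of_gt hc
  have hsplit : (2 * a * b + b ^ 2) / (2 * c) = a * b / c + b ^ 2 / (2 * c) := by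
    field_simp
  rw [hsplit, Real.exp_add]
  set X := a * b / c with hX
  set Y := b ^ 2 / (2 * c) with hY
  have hXle : X ≤ 0 := div_nonpos_of_nonpos_of_nonneg (mul_nonpos_of_nonneg_of_nonpos ha hb) hc.le
  have hYge : 0 ≤ Y := by positivity
  have h1 : Real.exp X ≤ 1 + X + X ^ 2 / 2 := exp_le_quad hXle
  have hE : (0:ℝ) < Real.exp Y := Real.exp_pos _
  have hE1 : 1 ≤ Real.exp Y := Real.one_le_exp hYge
  have h2 : Real.exp Y * (1 - Y) ≤ 1 := by
    have h3 : Real.exp Y * Real.exp (-Y) = 1 := by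
      rw [← Real.exp_add]; simp
    have h4 := Real.add_one_le_exp (-Y)
    nlinarith [Real.exp_pos Y]
  have hid : X ^ 2 / 2 = (a ^ 2 / c) * Y := by
    rw [hX, hY]; field_simp
  have hid2 : (a ^ 2 + b ^ 2) / c = a ^ 2 / c + 2 * Y := by
    rw [hY]; field_simp
  rw [hid2]
  have hta : 0 ≤ a ^ 2 / c := by positivity
  nlinarith [mul_le_mul_of_nonneg_left h1 hE.le, mul_nonneg (mul_nonneg hYge hYge) hE.le,
    mul_nonneg (mul_nonneg hta hYge) (sub_nonneg.2 hE1),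
    mul_nonneg (neg_nonneg.2 hXle) (sub_nonneg.2 hE1)]
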